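/- For any two projection operators f and g on a complex Hilbert space, ‖f∘g + g∘f‖ ≤ ‖f∘g‖ + ‖f∘g‖². -/

import Mathlib

open ContinuousLinearMap

local notation "⟪" x ", " y "⟫" => @inner ℂ _ _ x y

private lemma re_swap {H : Type*} [NormedAddCommGroup H] [InnerProductSpace ℂ H]
    (u v : H) : Complex.re ⟪u, v⟫ = Complex.re ⟪v, u⟫ := by
  rw [← inner_conj_symm v u]
  exact Complex.conj_re _

private lemma re_self {H : Type*} [NormedAddCommGroup H] [InnerProductSpace ℂ H]
    (u : H) : Complex.re ⟪u, u⟫ = ‖u‖ ^ 2 := by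
  rw [@inner_self_eq_norm_sq_to_K ℂ]
  norm_cast

/-- A self-adjoint operator's norm is bounded by a bound on its quadratic form. -/
theorem aux_selfAdjoint_norm_le
    {H : Type*} [NormedAddCommGroup H] [InnerProductSpace ℂ H] [CompleteSpace H]
    (T : H →L[ℂ] H) (hT : adjoint T = T) {M : ℝ} (hM : 0 ≤ M)
    (h : ∀ x : H, |Complex.re ⟪T x, x⟫| ≤ M * ‖x‖ ^ 2) : ‖T‖ ≤ M := by
  have hsym : ∀ u v : H, ⟪T u, v⟫ = ⟪u, T v⟫ :=
    (isSelfAdjoint_iff_isSymmetric.mp (isSelfAdjoint_iff'.mpr hT))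
  apply T.opNorm_le_bound hM
  intro x
  by_cases hx : x = 0
  · simp [hx]
  have key : ∀ y : H, 4 * Complex.re ⟪T x, y⟫ ≤ 2 * M * (‖x‖ ^ 2 + ‖y‖ ^ 2) := by
    intro y
    have hyx : Complex.re ⟪T y, x⟫ = Complex.re ⟪T x, y⟫ := by
      rw [hsym y x, re_swap]
    have h1 : Complex.re ⟪T (x + y), x + y⟫
        = Complex.re ⟪T x, x⟫ + 2 * Complex.re ⟪T x, y⟫ + Complex.re ⟪T y, y⟫ := by
      simp only [map_add, inner_add_left, inner_add_right, Complex.add_re]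
      rw [show Complex.re ⟪T y, x⟫ = Complex.re ⟪T x, y⟫ from hyx]
      ring
    have h2 : Complex.re ⟪T (x - y), x - y⟫
        = Complex.re ⟪T x, x⟫ - 2 * Complex.re ⟪T x, y⟫ + Complex.re ⟪T y, y⟫ := by
      simp only [map_sub, inner_sub_left, inner_sub_right, Complex.sub_re]
      rw [show Complex.re ⟪T y, x⟫ = Complex.re ⟪T x, y⟫ from hyx]
      ring
    have hb1 := (abs_le.mp (h (x + y))).2
    have hb2 := (abs_le.mp (h (x - y))).1
    have hpar : ‖x + y‖ ^ 2 + ‖x - y‖ ^ 2 = 2 * (‖x‖ ^ 2 + ‖y‖ ^ 2) := by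
      have := parallelogram_law_with_norm ℂ x y
      nlinarith [this]
    nlinarith [hb1, hb2, h1, h2, hpar]
  by_cases hTx : T x = 0
  · simp [hTx]
    positivity
  have hTxn : (0:ℝ) < ‖T x‖ := norm_pos_iff.mpr hTx
  have hxn : (0:ℝ) < ‖x‖ := norm_pos_iff.mpr hx
  set r : ℝ := ‖x‖ / ‖T x‖ with hr
  have hrpos : 0 < r := div_pos hxn hTxn
  have hy := key ((r : ℂ) • T x)
  have hinner : Complex.re ⟪T x, (r : ℂ) • T x⟫ = ‖x‖ * ‖T x‖ := by
    rw [inner_smul_right]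
    have : ((r : ℂ) * ⟪T x, T x⟫).re = r * Complex.re ⟪T x, T x⟫ := by
      rw [Complex.re_ofReal_mul]
    rw [this, re_self]
    field_simp [hr]
    rw [hr]; field_simp
  have hnorm : ‖(r : ℂ) • T x‖ = ‖x‖ := by
    rw [norm_smul]
    simp only [Complex.norm_real, Real.norm_eq_abs, abs_of_pos hrpos, hr]
    rw [abs_of_pos (div_pos hxn hTxn)]
    field_simp
  rw [hinner, hnorm] at hy
  nlinarith [hy, hxn]

theorem anticommutator_norm_le
    {H : Type*} [NormedAddCommGroup H] [InnerProductSpace ℂ H] [CompleteSpace H]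
    (f g : H →L[ℂ] H)
    (hf : f ∘L f = f) (hf' : adjoint f = f)
    (hg : g ∘L g = g) (hg' : adjoint g = g) :
    ‖f ∘L g + g ∘L f‖ ≤ ‖f ∘L g‖ + ‖f ∘L g‖ ^ 2 := by
  set c : ℝ := ‖f ∘L g‖ with hc
  have hc0 : 0 ≤ c := norm_nonneg _
  have hTsa : adjoint (f ∘L g + g ∘L f) = f ∘L g + g ∘L f := by
    rw [map_add, adjoint_comp, adjoint_comp, hf', hg', add_comm]
  apply aux_selfAdjoint_norm_le _ hTsa (by positivity)
  intro x
  have hff : f (f x) = f x := by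
    have := congrArg (fun T : H →L[ℂ] H => T x) hf
    simpa using this
  have hgg : g (g x) = g x := by
    have := congrArg (fun T : H →L[ℂ] H => T x) hg
    simpa using this
  have hfsym : ∀ u v : H, ⟪f u, v⟫ = ⟪u, f v⟫ :=
    (isSelfAdjoint_iff_isSymmetric.mp (isSelfAdjoint_iff'.mpr hf'))
  have hgsym : ∀ u v : H, ⟪g u, v⟫ = ⟪u, g v⟫ :=
    (isSelfAdjoint_iff_isSymmetric.mp (isSelfAdjoint_iff'.mpr hg'))
  set a : ℝ := ‖f x‖ with ha
  set b : ℝ := ‖g x‖ with hb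
  have key1 : ‖⟪g x, f x⟫‖ ≤ c * b * a := by
    have e1 : ⟪g x, f x⟫ = ⟪(f ∘L g) (g x), f x⟫ := by
      rw [comp_apply, hgg, hfsym (g x) (f x), hff]
    rw [e1]
    calc ‖⟪(f ∘L g) (g x), f x⟫‖ ≤ ‖(f ∘L g) (g x)‖ * ‖f x‖ := norm_inner_le_norm _ _
      _ ≤ (c * ‖g x‖) * ‖f x‖ := by
          apply mul_le_mul_of_nonneg_right _ (norm_nonneg _)
          exact (f ∘L g).le_opNorm (g x)
      _ = c * b * a := by rw [← ha, ← hb]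
  have hfx2 : Complex.re ⟪f x, x⟫ = a ^ 2 := by
    have e : ⟪f x, x⟫ = ⟪f x, f x⟫ := by
      conv_lhs => rw [← hff]
      rw [hfsym (f x) x]
    rw [e, re_self, ha]
  have hgx2 : Complex.re ⟪g x, x⟫ = b ^ 2 := by
    have e : ⟪g x, x⟫ = ⟪g x, g x⟫ := by
      conv_lhs => rw [← hgg]
      rw [hgsym (g x) x]
    rw [e, re_self, hb]
  have key2 : a ^ 2 + b ^ 2 ≤ (1 + c) * ‖x‖ ^ 2 := by
    set S : ℝ := a ^ 2 + b ^ 2 with hS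
    have hS0 : 0 ≤ S := by positivity
    have h1 : S ≤ ‖f x + g x‖ * ‖x‖ := by
      have e : S = Complex.re ⟪f x + g x, x⟫ := by
        rw [inner_add_left, Complex.add_re, hfx2, hgx2]
      rw [e]
      calc Complex.re ⟪f x + g x, x⟫ ≤ ‖⟪f x + g x, x⟫‖ := Complex.re_le_norm _
        _ ≤ ‖f x + g x‖ * ‖x‖ := norm_inner_le_norm _ _
    have h2 : ‖f x + g x‖ ^ 2 ≤ (1 + c) * S := by
      have e : ‖f x + g x‖ ^ 2 = a ^ 2 + b ^ 2 + 2 * Complex.re ⟪f x, g x⟫ := by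
        rw [ha, hb, @norm_add_sq ℂ]
        simp only [RCLike.re_to_complex]
        ring
      have hre : Complex.re ⟪f x, g x⟫ ≤ c * b * a := by
        calc Complex.re ⟪f x, g x⟫ ≤ ‖⟪f x, g x⟫‖ := Complex.re_le_norm _
          _ = ‖⟪g x, f x⟫‖ := by
              rw [← inner_conj_symm (g x) (f x), RCLike.norm_conj]
          _ ≤ c * b * a := key1
      have hab : 2 * (c * b * a) ≤ c * (a ^ 2 + b ^ 2) := by
        nlinarith [sq_nonneg (a - b), hc0]
      nlinarith [e, hre, hab, hS]
    have hsq : S ^ 2 ≤ (1 + c) * S * ‖x‖ ^ 2 := by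
      calc S ^ 2 ≤ (‖f x + g x‖ * ‖x‖) ^ 2 := by
            apply pow_le_pow_left₀ hS0 h1 2
        _ = ‖f x + g x‖ ^ 2 * ‖x‖ ^ 2 := by ring
        _ ≤ ((1 + c) * S) * ‖x‖ ^ 2 :=
            mul_le_mul_of_nonneg_right h2 (sq_nonneg _)
        _ = (1 + c) * S * ‖x‖ ^ 2 := by ring
    rcases eq_or_lt_of_le hS0 with hS' | hS'
    · rw [← hS']
      positivity
    · nlinarith [hsq, hS']
  have hval : Complex.re ⟪(f ∘L g + g ∘L f) x, x⟫ = 2 * Complex.re ⟪g x, f x⟫ := by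
    simp only [add_apply, comp_apply, inner_add_left, Complex.add_re]
    have e1 : Complex.re ⟪f (g x), x⟫ = Complex.re ⟪g x, f x⟫ := by
      rw [hfsym (g x) x]
    have e2 : Complex.re ⟪g (f x), x⟫ = Complex.re ⟪g x, f x⟫ := by
      rw [hgsym (f x) x, re_swap]
    rw [e1, e2]; ring
  rw [hval]
  have habs : |Complex.re ⟪g x, f x⟫| ≤ ‖⟪g x, f x⟫‖ := Complex.abs_re_le_norm _
  have hab : 2 * (c * b * a) ≤ c * (a ^ 2 + b ^ 2) := by
    nlinarith [sq_nonneg (a - b), hc0]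
  have hfin : |2 * Complex.re ⟪g x, f x⟫| ≤ c * ((1 + c) * ‖x‖ ^ 2) := by
    rw [abs_mul, abs_two]
    calc 2 * |Complex.re ⟪g x, f x⟫| ≤ 2 * (c * b * a) := by nlinarith [habs, key1]
      _ ≤ c * (a ^ 2 + b ^ 2) := hab
      _ ≤ c * ((1 + c) * ‖x‖ ^ 2) := mul_le_mul_of_nonneg_left key2 hc0
  calc |2 * Complex.re ⟪g x, f x⟫| ≤ c * ((1 + c) * ‖x‖ ^ 2) := hfin
    _ = (c + c ^ 2) * ‖x‖ ^ 2 := by ring
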